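/- Let p be an odd prime. In F_p[y_1,...,y_n]: the determinant [0,1,...,n-2,n] (exponent sequence 0,...,n-2 with n appended) equals L_{n-1} · V_n · (Q_{n-1,n-2}^p + V_n^{p-1}), where Q_{n-1,n-2} is a Dickson invariant in y_1,...,y_{n-1} and V_n = L_n/L_{n-1}. -/

import Mathlib

open MvPolynomial Finset

/-- `br p e = det (y_i ^ (p ^ e_j))` in `F_p[y_1,…,y_n]`. -/
noncomputable def br (p : ℕ) {n : ℕ} (e : Fin n → ℕ) : MvPolynomial (Fin n) (ZMod p) :=
  Matrix.det (Matrix.of fun i j : Fin n => (X i : MvPolynomial (Fin n) (ZMod p)) ^ p ^ e j)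

/-- `L_n = [0,1,…,n-1]`. -/
noncomputable def Lpoly (p n : ℕ) : MvPolynomial (Fin n) (ZMod p) :=
  br p (fun j : Fin n => (j : ℕ))

/-- `L_{n,s} = [0,…,ŝ,…,n]`. -/
noncomputable def Ls (p n s : ℕ) : MvPolynomial (Fin n) (ZMod p) :=
  br p (fun j : Fin n => if (j : ℕ) < s then (j : ℕ) else (j : ℕ) + 1)

/- aux -/
set_option maxHeartbeats 1600000

open Matrix in
lemma succAbove_val {m : ℕ} (c : Fin (m+1)) (j : Fin m) :
    ((c.succAbove j : Fin (m+1)) : ℕ) = if (j:ℕ) < (c:ℕ) then (j:ℕ) else (j:ℕ)+1 := by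
  rw [Fin.succAbove]
  split_ifs with h1 h2 h2
  · rfl
  · exact absurd (by exact_mod_cast h1) h2
  · exact absurd (show (j:ℕ) < c from by simpa [Fin.lt_def] using h2) (by simpa [Fin.lt_def] using h1)
  · rfl

open Matrix in
lemma pluecker {R : Type*} [CommRing R] (m : ℕ) (v : ℕ → Fin (m + 2) → R) :
    det (of fun i j : Fin (m+2) => v (if (j:ℕ) < m+1 then (j:ℕ) else m+2) i) *
      det (of fun i j : Fin (m+1) => v ((j:ℕ)+1) i.castSucc)
    = det (of fun i j : Fin (m+2) => v (j:ℕ) i) *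
        det (of fun i j : Fin (m+1) => v (if (j:ℕ) < m then (j:ℕ)+1 else m+2) i.castSucc)
      + det (of fun i j : Fin (m+2) => v ((j:ℕ)+1) i) *
          det (of fun i j : Fin (m+1) => v (j:ℕ) i.castSucc) := by
  classical
  -- P c : determinant of the (m+2)×(m+2) matrix omitting column c
  set Pd : Fin (m+3) → R := fun c =>
    det (of fun (r : Fin (m+2)) (j : Fin (m+2)) => v ((c.succAbove j : Fin (m+3)) : ℕ) r) with hPd
  -- truncated columns
  set w : ℕ → (Fin (m+1) → R) := fun c i => v c i.castSucc with hw
  -- Lemma A : ∑ c, (-1)^c * v c i * Pd c = 0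
  have hA : ∀ i : Fin (m+2), ∑ c : Fin (m+3), (-1:R)^(c:ℕ) * (v (c:ℕ) i * Pd c) = 0 := by
    intro i
    have h0 : (Matrix.of (Fin.cons (fun c : Fin (m+3) => v (c:ℕ) i)
        (fun r c => v (c:ℕ) r)) : Matrix (Fin (m+3)) (Fin (m+3)) R).det = 0 := by
      refine det_zero_of_row_eq (i := 0) (j := i.succ) (Fin.succ_ne_zero i).symm ?_
      funext c
      simp [Matrix.of_apply, Fin.cons_zero, Fin.cons_succ]
    rw [det_succ_row_zero] at h0
    rw [← h0]
    refine Finset.sum_congr rfl fun c _ => ?_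
    have hsub : ((Matrix.of (Fin.cons (fun c : Fin (m+3) => v (c:ℕ) i)
        (fun r c => v (c:ℕ) r)) : Matrix (Fin (m+3)) (Fin (m+3)) R).submatrix Fin.succ c.succAbove)
        = of fun (r : Fin (m+2)) (j : Fin (m+2)) => v ((c.succAbove j : Fin (m+3)) : ℕ) r := by
      funext r j
      simp [Matrix.submatrix_apply, Fin.cons_succ]
    rw [hsub]
    simp [mul_assoc, Fin.cons_zero, hPd]
  -- vector version
  have hA' : ∑ c : Fin (m+3), ((-1:R)^(c:ℕ) * Pd c) • w (c:ℕ) = (0 : Fin (m+1) → R) := by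
    funext i
    have := hA i.castSucc
    simpa [Finset.sum_apply, hw, mul_assoc, mul_left_comm, mul_comm] using this
  set f := (Matrix.detRowAlternating : (Fin (m+1) → R) [⋀^Fin (m+1)]→ₗ[R] R) with hf
  set base : Fin (m+1) → (Fin (m+1) → R) := fun j => w (j : ℕ) with hbase
  have key : ∑ c : Fin (m+3), ((-1:R)^(c:ℕ) * Pd c) * f (Function.update base 0 (w (c:ℕ))) = 0 := by
    have hlin := map_sum (f.toMultilinearMap.toLinearMap base 0)
        (fun c : Fin (m+3) => ((-1:R)^(c:ℕ) * Pd c) • w (c:ℕ)) Finset.univ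
    simp only [MultilinearMap.toLinearMap, LinearMap.coe_mk, AddHom.coe_mk,
      AlternatingMap.coe_multilinearMap] at hlin
    rw [hA'] at hlin
    have hz : f (Function.update base 0 (0 : Fin (m+1) → R)) = 0 :=
      f.map_coord_zero 0 (by simp)
    rw [hz] at hlin
    rw [show (∑ c : Fin (m+3), (-1:R)^(c:ℕ) * Pd c * f (Function.update base 0 (w (c:ℕ))))
        = ∑ c : Fin (m+3), f (Function.update base 0 ((((-1:R)^(c:ℕ) * Pd c)) • w (c:ℕ))) from
      Finset.sum_congr rfl fun c _ => by rw [f.map_update_smul, smul_eq_mul]]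
    exact hlin.symm
  set c1 : Fin (m+3) := ⟨m+1, by omega⟩ with hc1
  set c2 : Fin (m+3) := ⟨m+2, by omega⟩ with hc2
  -- terms outside {0, c1, c2} vanish
  have hvanish : ∀ c : Fin (m+3), c ∉ ({0, c1, c2} : Finset (Fin (m+3))) →
      f (Function.update base 0 (w (c:ℕ))) = 0 := by
    intro c hc
    simp only [Finset.mem_insert, Finset.mem_singleton, hc1, hc2, Fin.ext_iff,
      Fin.val_zero, not_or] at hc
    have hcl := c.isLt
    refine f.map_eq_zero_of_eq _ (i := (0 : Fin (m+1))) (j := ⟨(c:ℕ), by omega⟩) ?_ ?_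
    · rw [Function.update_self, Function.update_of_ne (Fin.ne_of_val_ne (by rw [Fin.val_zero]; dsimp only; omega))]
    · simp [Fin.ext_iff]; omega
  -- reduce sum to three terms
  have hsum : ∑ c : Fin (m+3), ((-1:R)^(c:ℕ) * Pd c) * f (Function.update base 0 (w (c:ℕ)))
      = ((-1:R)^((0:Fin (m+3)):ℕ) * Pd 0) * f (Function.update base 0 (w ((0:Fin (m+3)):ℕ)))
      + (((-1:R)^((c1:Fin (m+3)):ℕ) * Pd c1) * f (Function.update base 0 (w ((c1:Fin (m+3)):ℕ)))
      + ((-1:R)^((c2:Fin (m+3)):ℕ) * Pd c2) * f (Function.update base 0 (w ((c2:Fin (m+3)):ℕ)))) := by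
    rw [← Finset.sum_subset (Finset.subset_univ ({0, c1, c2} : Finset (Fin (m+3))))
      (fun c _ hc => by rw [hvanish c hc, mul_zero])]
    rw [Finset.sum_insert (by simp [hc1, hc2, Fin.ext_iff]),
      Finset.sum_insert (by simp [hc1, hc2, Fin.ext_iff]), Finset.sum_singleton]
  rw [hsum] at key
  have hval0 : (((0 : Fin (m+3))):ℕ) = 0 := rfl
  have hvalc1 : ((c1 : Fin (m+3)) : ℕ) = m+1 := rfl
  have hvalc2 : ((c2 : Fin (m+3)) : ℕ) = m+2 := rfl
  rw [hval0, hvalc1, hvalc2] at key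
  -- identify the three alternating-map values
  have ht0 : f (Function.update base 0 (w 0))
      = det (of fun i j : Fin (m+1) => v (j:ℕ) i.castSucc) := by
    have h1 : w 0 = base 0 := rfl
    rw [h1, Function.update_eq_self]
    rw [← Matrix.det_transpose]
    rfl
  -- the permutation
  have hsign : (Equiv.Perm.sign (finRotate (m+1)) : ℤ) = (-1:ℤ)^m := by
    rw [sign_finRotate]; push_cast; ring
  -- c1 term
  have ht1 : f (Function.update base 0 (w (m+1)))
      = (-1:R)^m * det (of fun i j : Fin (m+1) => v ((j:ℕ)+1) i.castSucc) := by
    have hcomp : (fun j : Fin (m+1) => w ((j:ℕ)+1))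
        = (Function.update base 0 (w (m+1))) ∘ (finRotate (m+1)) := by
      funext j
      by_cases hj : (j:ℕ) < m
      · have h1 : finRotate (m+1) j = ⟨(j:ℕ)+1, by omega⟩ := by
          rw [finRotate_succ_apply]
          ext
          rw [Fin.val_add_one_of_lt (by simpa [Fin.lt_def] using hj)]
        rw [Function.comp_apply, h1,
          Function.update_of_ne (show (⟨(j:ℕ)+1, by omega⟩ : Fin (m+1)) ≠ 0 by
            exact Fin.ne_of_val_ne (by rw [Fin.val_zero]; exact Nat.succ_ne_zero _))]
      · have hj' : j = Fin.last m := by ext; have := j.isLt; simp [Fin.val_last]; omega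
        subst hj'
        rw [Function.comp_apply, finRotate_last, Function.update_self]
        simp [Fin.val_last]
    have hperm := f.map_perm (Function.update base 0 (w (m+1))) (finRotate (m+1))
    rw [← hcomp] at hperm
    have := congrArg (fun x => (Equiv.Perm.sign (finRotate (m+1))) • x) hperm
    simp only [smul_smul, Int.units_mul_self, one_smul] at this
    rw [← this, Units.smul_def, zsmul_eq_mul, hsign]
    have hfb : f (fun j : Fin (m+1) => w ((j:ℕ)+1))
        = det (of fun i j : Fin (m+1) => v ((j:ℕ)+1) i.castSucc) := by
      rw [← Matrix.det_transpose]; rfl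
    rw [hfb]; push_cast; ring
  -- c2 term
  have ht2 : f (Function.update base 0 (w (m+2)))
      = (-1:R)^m * det (of fun i j : Fin (m+1) =>
          v (if (j:ℕ) < m then (j:ℕ)+1 else m+2) i.castSucc) := by
    have hcomp : (fun j : Fin (m+1) => w (if (j:ℕ) < m then (j:ℕ)+1 else m+2))
        = (Function.update base 0 (w (m+2))) ∘ (finRotate (m+1)) := by
      funext j
      by_cases hj : (j:ℕ) < m
      · have h1 : finRotate (m+1) j = ⟨(j:ℕ)+1, by omega⟩ := by
          rw [finRotate_succ_apply]
          ext
          rw [Fin.val_add_one_of_lt (by simpa [Fin.lt_def] using hj)]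
        rw [if_pos hj, Function.comp_apply, h1,
          Function.update_of_ne (show (⟨(j:ℕ)+1, by omega⟩ : Fin (m+1)) ≠ 0 by
            exact Fin.ne_of_val_ne (by rw [Fin.val_zero]; exact Nat.succ_ne_zero _))]
      · have hj' : j = Fin.last m := by ext; have := j.isLt; simp [Fin.val_last]; omega
        subst hj'
        rw [Function.comp_apply, finRotate_last, Function.update_self]
        simp [Fin.val_last]
    have hperm := f.map_perm (Function.update base 0 (w (m+2))) (finRotate (m+1))
    rw [← hcomp] at hperm
    have := congrArg (fun x => (Equiv.Perm.sign (finRotate (m+1))) • x) hperm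
    simp only [smul_smul, Int.units_mul_self, one_smul] at this
    rw [← this, Units.smul_def, zsmul_eq_mul, hsign]
    have hfb : f (fun j : Fin (m+1) => w (if (j:ℕ) < m then (j:ℕ)+1 else m+2))
        = det (of fun i j : Fin (m+1) =>
            v (if (j:ℕ) < m then (j:ℕ)+1 else m+2) i.castSucc) := by
      rw [← Matrix.det_transpose]; rfl
    rw [hfb]; push_cast; ring
  -- identify the Pd's
  have hP0 : Pd 0 = det (of fun i j : Fin (m+2) => v ((j:ℕ)+1) i) := by
    simp only [hPd]
    congr 1
  have hP1 : Pd c1 = det (of fun i j : Fin (m+2) =>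
      v (if (j:ℕ) < m+1 then (j:ℕ) else m+2) i) := by
    simp only [hPd]
    congr 1
    funext r j
    rw [Matrix.of_apply, Matrix.of_apply, succAbove_val, hvalc1]
    have := j.isLt
    by_cases h : (j:ℕ) < m+1
    · rw [if_pos h, if_pos h]
    · rw [if_neg h, if_neg h]
      congr 1
      omega
  have hP2 : Pd c2 = det (of fun i j : Fin (m+2) => v (j:ℕ) i) := by
    simp only [hPd]
    congr 1
    funext r j
    rw [Matrix.of_apply, Matrix.of_apply, succAbove_val, hvalc2]
    rw [if_pos j.isLt]
  rw [ht0, ht1, ht2, hP0, hP1, hP2] at key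
  have e1 : (-1:R)^(m+1) * (-1:R)^m = -1 := by
    rw [← pow_add]
    exact Odd.neg_one_pow ⟨m, by ring⟩
  have e2 : (-1:R)^(m+2) * (-1:R)^m = 1 := by
    rw [← pow_add]
    exact Even.neg_one_pow ⟨m+1, by ring⟩
  rw [pow_zero, one_mul] at key
  linear_combination (-1 : R) * key
    + (det (of fun i j : Fin (m+2) => v (if (j:ℕ) < m+1 then (j:ℕ) else m+2) i) *
        det (of fun i j : Fin (m+1) => v ((j:ℕ)+1) i.castSucc)) * e1
    + (det (of fun i j : Fin (m+2) => v (j:ℕ) i) *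
        det (of fun i j : Fin (m+1) => v (if (j:ℕ) < m then (j:ℕ)+1 else m+2) i.castSucc)) * e2


lemma Lpoly_ne_zero (p m : ℕ) (hp : p.Prime) : Lpoly p m ≠ 0 := by
  haveI : Fact p.Prime := ⟨hp⟩
  set t : Fin m →₀ ℕ := ∑ j : Fin m, Finsupp.single j (p ^ (j:ℕ)) with ht
  have happ : ∀ (σ : Equiv.Perm (Fin m)) (k : Fin m),
      (∑ j : Fin m, Finsupp.single (σ j) (p ^ (j:ℕ))) k = p ^ ((σ.symm k : Fin m) : ℕ) := by
    intro σ k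
    rw [Finsupp.finset_sum_apply]
    rw [Finset.sum_eq_single (σ.symm k)]
    · simp [Finsupp.single_apply]
    · intro j _ hj
      rw [Finsupp.single_apply, if_neg]
      intro h
      exact hj (by simpa using congrArg σ.symm h)
    · simp
  have htk : ∀ k : Fin m, t k = p ^ (k : ℕ) := by
    intro k
    rw [ht, Finsupp.finset_sum_apply]
    rw [Finset.sum_eq_single k]
    · simp
    · intro j _ hj
      rw [Finsupp.single_apply, if_neg (by simpa using hj)]
    · simp
  have hcoeff : coeff t (Lpoly p m) = 1 := by
    rw [Lpoly, br, Matrix.det_apply]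
    have hterm : ∀ σ : Equiv.Perm (Fin m),
        (∏ i : Fin m, (Matrix.of fun i j : Fin m =>
            (X i : MvPolynomial (Fin m) (ZMod p)) ^ p ^ (j:ℕ)) (σ i) i)
          = monomial (∑ j : Fin m, Finsupp.single (σ j) (p ^ (j:ℕ))) (1 : ZMod p) := by
      intro σ
      rw [monomial_sum_one]
      exact Finset.prod_congr rfl fun i _ => by rw [Matrix.of_apply, X_pow_eq_monomial]
    rw [coeff_sum]
    rw [Finset.sum_eq_single (1 : Equiv.Perm (Fin m))]
    · rw [hterm, MvPolynomial.coeff_smul, coeff_monomial, if_pos (by simp [ht])]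
      simp
    · intro σ _ hσ
      rw [hterm, MvPolynomial.coeff_smul, coeff_monomial, if_neg, smul_zero]
      intro h
      apply hσ
      have hval : ∀ k : Fin m, p ^ ((σ.symm k : Fin m) : ℕ) = p ^ (k : ℕ) := by
        intro k
        have h1 := congrFun (congrArg (fun f : Fin m →₀ ℕ => (f : Fin m → ℕ)) h) k
        simpa [happ σ k, htk k] using h1
      have hsymm : σ.symm = 1 := by
        ext k
        have := Nat.pow_right_injective hp.two_le (hval k)
        simp only [Equiv.Perm.coe_one, id_eq]
        exact this
      have : σ = 1 := by
        rw [← Equiv.symm_symm σ, hsymm]; rfl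
      exact this
    · simp
  intro h
  rw [h, coeff_zero] at hcoeff
  exact one_ne_zero hcoeff.symm

lemma det_pow_p {R : Type*} [CommRing R] (p : ℕ) [ExpChar R p] {ι : Type*} [DecidableEq ι]
    [Fintype ι] (M : Matrix ι ι R) : M.det ^ p = (M.map (frobenius R p)).det := by
  rw [← frobenius_def, RingHom.map_det, RingHom.mapMatrix_apply]


/-- (The paper's `n ≥ 2` is `n+2`.)  The determinant with exponent sequence
`(0,…,n, n+2)` in `n+2` variables equals `L_{n+1} · V_{n+2} · (Q_{n+1,n}^p + V_{n+2}^{p-1})`,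
where `Q_{n+1,n}` is a Dickson invariant in the first `n+1` variables and
`V_{n+2} = L_{n+2}/L_{n+1}`. -/
theorem stmt10 (p n : ℕ) (hp : p.Prime) (hodd : Odd p)
    (QQ : MvPolynomial (Fin (n + 1)) (ZMod p))
    (hQQ : Lpoly p (n + 1) * QQ = Ls p (n + 1) n)
    (V : MvPolynomial (Fin (n + 2)) (ZMod p))
    (hV : rename Fin.castSucc (Lpoly p (n + 1)) * V = Lpoly p (n + 2)) :
    br p (fun j : Fin (n + 2) => if (j : ℕ) < n + 1 then (j : ℕ) else n + 2) =
      rename Fin.castSucc (Lpoly p (n + 1)) * V *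
        ((rename Fin.castSucc QQ) ^ p + V ^ (p - 1)) := by

  haveI : Fact p.Prime := ⟨hp⟩
  set L' : MvPolynomial (Fin (n+2)) (ZMod p) := rename Fin.castSucc (Lpoly p (n+1)) with hL'
  set Q' : MvPolynomial (Fin (n+2)) (ZMod p) := rename Fin.castSucc QQ with hQ'def
  have hL'ne : L' ≠ 0 := by
    rw [hL']
    intro h
    exact Lpoly_ne_zero p (n+1) hp
      ((map_eq_zero_iff _ (rename_injective _ (Fin.castSucc_injective _))).mp h)
  have hQ' : L' * Q' = rename Fin.castSucc (Ls p (n+1) n) := by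
    rw [hL', hQ'def, ← map_mul, hQQ]
  -- rename of a Moore-type determinant
  have hrename : ∀ e : Fin (n+1) → ℕ,
      rename (Fin.castSucc (n := n+1)) (br p e)
        = Matrix.det (Matrix.of fun i j : Fin (n+1) =>
            (X i.castSucc : MvPolynomial (Fin (n+2)) (ZMod p)) ^ p ^ e j) := by
    intro e
    rw [br, AlgHom.map_det (rename (Fin.castSucc (n := n+1)))]
    congr 1
    funext i j
    simp [Matrix.map_apply, map_pow, rename_X]
  apply mul_left_cancel₀ (pow_ne_zero p hL'ne)
  have h1 : p - 1 + 1 = p := Nat.succ_pred_eq_of_pos hp.pos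
  have hrhs : L'^p * (L' * V * (Q'^p + V^(p-1)))
      = (L' * Q')^p * (L' * V) + (L' * V)^p * L' := by
    calc L'^p * (L' * V * (Q'^p + V^(p-1)))
        = (L'*Q')^p * (L'*V) + (L'^p * V^(p-1+1)) * L' := by rw [pow_succ]; ring
      _ = (L' * Q')^p * (L' * V) + (L' * V)^p * L' := by rw [h1]; ring
  rw [hrhs, hQ', hV]
  -- now everything is a determinant identity
  set v : ℕ → Fin (n+2) → MvPolynomial (Fin (n+2)) (ZMod p) := fun c i => (X i : MvPolynomial (Fin (n+2)) (ZMod p)) ^ p ^ c with hv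
  have hpl := pluecker n v
  -- identify the six determinants
  have E1 : br p (fun j : Fin (n+2) => if (j:ℕ) < n+1 then (j:ℕ) else n+2)
      = Matrix.det (Matrix.of fun i j : Fin (n+2) => v (if (j:ℕ) < n+1 then (j:ℕ) else n+2) i) := rfl
  have E2 : L'^p = Matrix.det (Matrix.of fun i j : Fin (n+1) => v ((j:ℕ)+1) i.castSucc) := by
    rw [hL']
    rw [show Lpoly p (n+1) = br p (fun j : Fin (n+1) => (j:ℕ)) from rfl]
    rw [hrename, det_pow_p p]
    congr 1
    funext i j
    simp [Matrix.map_apply, frobenius_def, ← pow_mul, pow_succ, hv]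
  have E3 : Lpoly p (n+2) = Matrix.det (Matrix.of fun i j : Fin (n+2) => v (j:ℕ) i) := rfl
  have E4 : (rename (Fin.castSucc (n := n+1)) (Ls p (n+1) n))^p
      = Matrix.det (Matrix.of fun i j : Fin (n+1) =>
          v (if (j:ℕ) < n then (j:ℕ)+1 else n+2) i.castSucc) := by
    rw [show Ls p (n+1) n = br p (fun j : Fin (n+1) => if (j:ℕ) < n then (j:ℕ) else (j:ℕ)+1) from rfl]
    rw [hrename, det_pow_p p]
    congr 1
    funext i j
    rw [Matrix.map_apply, Matrix.of_apply, Matrix.of_apply, hv]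
    rw [frobenius_def, ← pow_mul, ← pow_succ]
    by_cases hj : (j:ℕ) < n
    · rw [if_pos hj, if_pos hj]
    · rw [if_neg hj, if_neg hj]
      have : (j:ℕ) = n := by have := j.isLt; omega
      rw [this]
  have E5 : (Lpoly p (n+2))^p
      = Matrix.det (Matrix.of fun i j : Fin (n+2) => v ((j:ℕ)+1) i) := by
    rw [show Lpoly p (n+2) = br p (fun j : Fin (n+2) => (j:ℕ)) from rfl, br, det_pow_p p]
    congr 1
    funext i j
    simp [Matrix.map_apply, frobenius_def, ← pow_mul, pow_succ, hv]
  have E6 : L' = Matrix.det (Matrix.of fun i j : Fin (n+1) => v (j:ℕ) i.castSucc) := by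
    rw [hL', show Lpoly p (n+1) = br p (fun j : Fin (n+1) => (j:ℕ)) from rfl, hrename]
  rw [E1, E2, E4, E5, E3, E6]
  linear_combination hpl
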